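/- Let d be an odd prime, k ≠ k' two Wootters–Fields labels, and ρ = |Φ⁺⟩⟨Φ⁺| the maximally entangled pure state on ℂ^d⊗ℂ^d. Then the two-MUB fidelity lower bound F̃(ρ,Φ⁺) is tight: the coincidence probabilities satisfy ⟨m̂_k n̂_k*|Φ⁺⟩⟨Φ⁺|m̂_k n̂_k*⟩ = δ_{mn}/d for both bases, and consequently F̃(ρ,Φ⁺) = (1/d)·1 + 1 − 1/d − 0 = 1 = ⟨Φ⁺|ρ|Φ⁺⟩. -/

import Mathlib

open Matrix
open scoped ComplexOrder

/-- Component `j` of the Wootters–Fields basis vector `|m̂_k⟩`. -/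
noncomputable def wfComp (d : ℕ) (k m j : Fin d) : ℂ :=
  ((1 / Real.sqrt d : ℝ) : ℂ) *
    Complex.exp (2 * Real.pi * Complex.I *
      (((m.val * j.val + k.val * j.val ^ 2 : ℕ) : ℂ)) / d)

/-- The product vector `|m̂_k n̂_k*⟩ = |m̂_k⟩ ⊗ |n̂_k*⟩` on `ℂ^d ⊗ ℂ^d`. -/
noncomputable def wfPair (d : ℕ) (k m n : Fin d) : Fin d × Fin d → ℂ :=
  fun p => wfComp d k m p.1 * (starRingEnd ℂ) (wfComp d k n p.2)

/-- `γ̃_{mnm'n'} = 1/d` if `(m−m'−n+n') ≡ 0 (mod d)` and `0` otherwise. -/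
noncomputable def gammaCoef (d : ℕ) (m n m' n' : Fin d) : ℝ :=
  if ((m.val : ℤ) - (m'.val : ℤ) - (n.val : ℤ) + (n'.val : ℤ)) % (d : ℤ) = 0
  then 1 / d else 0

/-- Sum of powers of a `d`-th root of unity. -/
lemma root_sum (d : ℕ) (hd0 : 0 < d) (m n : Fin d) :
    ∑ j ∈ Finset.range d,
      Complex.exp (2 * Real.pi * Complex.I * ((n.val : ℂ) - (m.val : ℂ)) / d) ^ j
      = if m = n then (d : ℂ) else 0 := by
  have hdC : (d : ℂ) ≠ 0 := by exact_mod_cast hd0.ne'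
  by_cases h : m = n
  · subst h
    simp
  · rw [if_neg h]
    set ζ : ℂ := Complex.exp (2 * Real.pi * Complex.I * ((n.val : ℂ) - (m.val : ℂ)) / d)
      with hζ
    have h2 : (2 * (Real.pi : ℂ) * Complex.I : ℂ) ≠ 0 := by
      simp [Real.pi_ne_zero, Complex.I_ne_zero]
    have hζ1 : ζ ≠ 1 := by
      intro hcon
      rw [hζ, Complex.exp_eq_one_iff] at hcon
      obtain ⟨t, ht⟩ := hcon
      have h3 : ((n.val : ℂ) - (m.val : ℂ)) = (t : ℂ) * d := by
        have h4 : (2 * (Real.pi : ℂ) * Complex.I) * ((n.val : ℂ) - (m.val : ℂ))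
            = (2 * (Real.pi : ℂ) * Complex.I) * ((t : ℂ) * d) := by
          field_simp at ht
          linear_combination (2 * (Real.pi : ℂ) * Complex.I) * ht
        exact mul_left_cancel₀ h2 h4
      have h5 : ((n.val : ℤ) - (m.val : ℤ)) = t * d := by
        have := h3
        push_cast at this
        exact_mod_cast this
      have hm := m.isLt
      have hn := n.isLt
      rcases eq_or_ne t 0 with ht0 | ht0
      · subst ht0
        simp at h5
        exact h (Fin.ext (by omega))
      · have h6 : 1 ≤ |t| := Int.one_le_abs ht0
        have h7 : (d : ℤ) ≤ |t * d| := by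
          rw [abs_mul, Int.abs_natCast]
          nlinarith
        have h8 : |(n.val : ℤ) - (m.val : ℤ)| < d := by
          rw [abs_lt]; omega
        rw [← h5] at h7
        omega
    have hζd : ζ ^ d = 1 := by
      rw [hζ, ← Complex.exp_nat_mul]
      have : (d : ℂ) * (2 * Real.pi * Complex.I * ((n.val : ℂ) - (m.val : ℂ)) / d)
          = (((n.val : ℤ) - (m.val : ℤ) : ℤ) : ℂ) * (2 * Real.pi * Complex.I) := by
        push_cast
        field_simp
      rw [this, Complex.exp_int_mul_two_pi_mul_I]
    rw [geom_sum_eq hζ1, hζd, sub_self, zero_div]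

/-- Orthonormality written as a single-term computation. -/
lemma wf_ortho (d : ℕ) (hd0 : 0 < d) (k m n : Fin d) :
    ∑ j : Fin d, (starRingEnd ℂ) (wfComp d k m j) * wfComp d k n j
      = if m = n then 1 else 0 := by
  have hdR : (0 : ℝ) < d := by exact_mod_cast hd0
  have hdC : (d : ℂ) ≠ 0 := by exact_mod_cast hd0.ne'
  have hterm : ∀ j : Fin d,
      (starRingEnd ℂ) (wfComp d k m j) * wfComp d k n j
        = ((1 / (d : ℝ) : ℝ) : ℂ) *
          Complex.exp (2 * Real.pi * Complex.I * ((n.val : ℂ) - (m.val : ℂ)) / d)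
            ^ (j : ℕ) := by
    intro j
    unfold wfComp
    rw [_root_.map_mul, ← Complex.exp_conj]
    have hr : (starRingEnd ℂ) (((1 / Real.sqrt d : ℝ) : ℂ)) = ((1 / Real.sqrt d : ℝ) : ℂ) :=
      Complex.conj_ofReal _
    rw [hr, ← Complex.exp_nat_mul]
    skip
    have hcoef : (((1 / Real.sqrt d : ℝ) : ℂ)) * (((1 / Real.sqrt d : ℝ) : ℂ))
        = ((1 / (d : ℝ) : ℝ) : ℂ) := by
      rw [← Complex.ofReal_mul]
      congr 1
      rw [div_mul_div_comm, one_mul, Real.mul_self_sqrt hdR.le]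
    have hconj : (starRingEnd ℂ)
        (2 * Real.pi * Complex.I * (((m.val * j.val + k.val * j.val ^ 2 : ℕ) : ℂ)) / d)
        = -(2 * Real.pi * Complex.I * (((m.val * j.val + k.val * j.val ^ 2 : ℕ) : ℂ)) / d) := by
      simp only [map_div₀, _root_.map_mul, Complex.conj_I, Complex.conj_natCast,
        Complex.conj_ofReal, map_ofNat]
      ring
    rw [hconj]
    have key : Complex.exp (-(2 * Real.pi * Complex.I *
          (((m.val * j.val + k.val * j.val ^ 2 : ℕ) : ℂ)) / d)) *
        Complex.exp (2 * Real.pi * Complex.I *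
          (((n.val * j.val + k.val * j.val ^ 2 : ℕ) : ℂ)) / d)
        = Complex.exp ((j.val : ℂ) *
            (2 * Real.pi * Complex.I * ((n.val : ℂ) - (m.val : ℂ)) / d)) := by
      rw [← Complex.exp_add]
      congr 1
      push_cast
      field_simp
      ring
    rw [← hcoef, ← key]
    ring
  calc ∑ j : Fin d, (starRingEnd ℂ) (wfComp d k m j) * wfComp d k n j
      = ∑ j : Fin d, ((1 / (d : ℝ) : ℝ) : ℂ) *
          Complex.exp (2 * Real.pi * Complex.I * ((n.val : ℂ) - (m.val : ℂ)) / d)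
            ^ (j : ℕ) := by
        exact Finset.sum_congr rfl fun j _ => hterm j
    _ = ((1 / (d : ℝ) : ℝ) : ℂ) * ∑ j ∈ Finset.range d,
          Complex.exp (2 * Real.pi * Complex.I * ((n.val : ℂ) - (m.val : ℂ)) / d) ^ j := by
        rw [← Finset.mul_sum, Fin.sum_univ_eq_sum_range]
    _ = if m = n then 1 else 0 := by
        rw [root_sum d hd0 m n]
        by_cases h : m = n <;> simp [h] <;> push_cast <;> field_simp

lemma coef_sq (d : ℕ) (hd0 : 0 < d) :
    (((1 / Real.sqrt d : ℝ) : ℂ)) * (((1 / Real.sqrt d : ℝ) : ℂ)) = 1 / (d : ℂ) := by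
  have hdR : (0 : ℝ) < d := by exact_mod_cast hd0
  rw [← Complex.ofReal_mul, div_mul_div_comm, one_mul, Real.mul_self_sqrt hdR.le]
  push_cast
  ring

lemma quad_form {ι : Type*} [Fintype ι] (a b v : ι → ℂ) :
    star v ⬝ᵥ (Matrix.vecMulVec a b) *ᵥ v = (star v ⬝ᵥ a) * (b ⬝ᵥ v) := by
  have hmv : (Matrix.vecMulVec a b) *ᵥ v = (b ⬝ᵥ v) • a := by
    ext i
    simp only [vecMulVec_apply, mulVec, dotProduct, Pi.smul_apply, smul_eq_mul,
      Finset.sum_mul, Finset.mul_sum]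
    exact Finset.sum_congr rfl fun q _ => by ring
  rw [hmv, dotProduct_smul, smul_eq_mul, mul_comm]

lemma conj_dot {ι : Type*} [Fintype ι] (a b : ι → ℂ) :
    star a ⬝ᵥ b = (starRingEnd ℂ) (star b ⬝ᵥ a) := by
  simp only [dotProduct, map_sum, _root_.map_mul, Pi.star_apply, RCLike.star_def,
    Complex.conj_conj]
  exact Finset.sum_congr rfl fun p _ => mul_comm _ _

lemma pair_dot (d : ℕ) (hd0 : 0 < d) (k m n : Fin d) (Φ : Fin d × Fin d → ℂ)
    (hΦ : ∀ p : Fin d × Fin d,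
      Φ p = if p.1 = p.2 then ((1 / Real.sqrt d : ℝ) : ℂ) else 0) :
    star (wfPair d k m n) ⬝ᵥ Φ
      = if m = n then ((1 / Real.sqrt d : ℝ) : ℂ) else 0 := by
  simp only [dotProduct, Fintype.sum_prod_type, hΦ, mul_ite, mul_zero,
    Finset.sum_ite_eq, Finset.sum_ite_eq', Finset.mem_univ, if_true, Pi.star_apply,
    wfPair, RCLike.star_def, _root_.map_mul, Complex.conj_conj]
  rw [← Finset.sum_mul, wf_ortho d hd0 k m n]
  split <;> simp

lemma pair_quad (d : ℕ) (hd0 : 0 < d) (k m n : Fin d) (Φ : Fin d × Fin d → ℂ)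
    (hΦ : ∀ p : Fin d × Fin d,
      Φ p = if p.1 = p.2 then ((1 / Real.sqrt d : ℝ) : ℂ) else 0)
    (ρ : Matrix (Fin d × Fin d) (Fin d × Fin d) ℂ)
    (hρ : ρ = Matrix.vecMulVec Φ (star Φ)) :
    star (wfPair d k m n) ⬝ᵥ ρ *ᵥ wfPair d k m n
      = if m = n then (1 / (d : ℂ)) else 0 := by
  rw [hρ, quad_form, conj_dot Φ (wfPair d k m n), pair_dot d hd0 k m n Φ hΦ]
  split
  · rw [Complex.conj_ofReal, coef_sq d hd0]
  · simp

theorem stmt_19 (d : ℕ) (hd : d.Prime) (hodd : Odd d) (k k' : Fin d) (hkk : k ≠ k')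
    (Φ : Fin d × Fin d → ℂ)
    (hΦ : ∀ p : Fin d × Fin d,
      Φ p = if p.1 = p.2 then ((1 / Real.sqrt d : ℝ) : ℂ) else 0)
    (ρ : Matrix (Fin d × Fin d) (Fin d × Fin d) ℂ)
    (hρ : ρ = Matrix.vecMulVec Φ (star Φ)) :
    (∀ m n : Fin d,
      star (wfPair d k m n) ⬝ᵥ ρ *ᵥ wfPair d k m n
        = if m = n then (1 / (d : ℂ)) else 0) ∧
    (∀ m n : Fin d,
      star (wfPair d k' m n) ⬝ᵥ ρ *ᵥ wfPair d k' m n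
        = if m = n then (1 / (d : ℂ)) else 0) ∧
    ((1 / (d : ℝ)) * ∑ m : Fin d, (star (wfPair d k m m) ⬝ᵥ ρ *ᵥ wfPair d k m m).re
      + ∑ m : Fin d, (star (wfPair d k' m m) ⬝ᵥ ρ *ᵥ wfPair d k' m m).re
      - 1 / d
      - ∑ m : Fin d, ∑ n : Fin d, ∑ m' : Fin d, ∑ n' : Fin d,
          (if m ≠ m' ∧ m ≠ n ∧ n ≠ n' ∧ n' ≠ m'
          then gammaCoef d m n m' n' *
            Real.sqrt ((star (wfPair d k m' n') ⬝ᵥ ρ *ᵥ wfPair d k m' n').re *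
              (star (wfPair d k m n) ⬝ᵥ ρ *ᵥ wfPair d k m n).re)
          else 0)) = 1 ∧
    star Φ ⬝ᵥ ρ *ᵥ Φ = 1 := by
  have hd0 : 0 < d := hd.pos
  have hdR : (0 : ℝ) < d := by exact_mod_cast hd0
  have h1 : ∀ m n : Fin d,
      star (wfPair d k m n) ⬝ᵥ ρ *ᵥ wfPair d k m n
        = if m = n then (1 / (d : ℂ)) else 0 :=
    fun m n => pair_quad d hd0 k m n Φ hΦ ρ hρ
  have h2 : ∀ m n : Fin d,
      star (wfPair d k' m n) ⬝ᵥ ρ *ᵥ wfPair d k' m n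
        = if m = n then (1 / (d : ℂ)) else 0 :=
    fun m n => pair_quad d hd0 k' m n Φ hΦ ρ hρ
  have hre : ∀ (kk : Fin d) (m : Fin d),
      (star (wfPair d kk m m) ⬝ᵥ ρ *ᵥ wfPair d kk m m).re = 1 / (d : ℝ) := by
    intro kk m
    rw [pair_quad d hd0 kk m m Φ hΦ ρ hρ, if_pos rfl]
    have : (1 / (d : ℂ)) = (((1 / d : ℝ)) : ℂ) := by push_cast; ring
    rw [this, Complex.ofReal_re]
  have hsum : ∀ kk : Fin d,
      ∑ m : Fin d, (star (wfPair d kk m m) ⬝ᵥ ρ *ᵥ wfPair d kk m m).re = 1 := by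
    intro kk
    rw [Finset.sum_congr rfl fun m _ => hre kk m, Finset.sum_const, Finset.card_univ,
      Fintype.card_fin, nsmul_eq_mul]
    field_simp
  have hcorr : (∑ m : Fin d, ∑ n : Fin d, ∑ m' : Fin d, ∑ n' : Fin d,
          (if m ≠ m' ∧ m ≠ n ∧ n ≠ n' ∧ n' ≠ m'
          then gammaCoef d m n m' n' *
            Real.sqrt ((star (wfPair d k m' n') ⬝ᵥ ρ *ᵥ wfPair d k m' n').re *
              (star (wfPair d k m n) ⬝ᵥ ρ *ᵥ wfPair d k m n).re)
          else 0)) = 0 := by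
    refine Finset.sum_eq_zero fun m _ => Finset.sum_eq_zero fun n _ =>
      Finset.sum_eq_zero fun m' _ => Finset.sum_eq_zero fun n' _ => ?_
    split
    · rename_i hc
      rw [h1 m n, if_neg hc.2.1]
      simp
    · rfl
  refine ⟨h1, h2, ?_, ?_⟩
  · rw [hsum k, hsum k', hcorr]
    ring
  · have hΦΦ : star Φ ⬝ᵥ Φ = 1 := by
      simp only [dotProduct, Pi.star_apply, RCLike.star_def, hΦ, Fintype.sum_prod_type,
        apply_ite (starRingEnd ℂ), map_zero, ite_mul, zero_mul, mul_ite, mul_zero,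
        Finset.sum_ite_eq, Finset.sum_ite_eq', Finset.mem_univ, if_true,
        Complex.conj_ofReal]
      rw [Finset.sum_congr rfl fun j _ => coef_sq d hd0, Finset.sum_const,
        Finset.card_univ, Fintype.card_fin, nsmul_eq_mul]
      have hdC : (d : ℂ) ≠ 0 := by exact_mod_cast hd0.ne'
      field_simp
    rw [hρ, quad_form, hΦΦ]
    simp
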